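/- Let B > 0, ζ > 0, and let z ∈ ℂ satisfy −B < Re z < B. Set a = 1/2 − z/(2B) (so 0 < Re a < 1). Then the integral ∫₀^∞ (B / sinh(Bt)) · exp(−(ζ/2)·coth(Bt) + t z) dt converges absolutely and equals e^{−ζ/2} · ∫₀^∞ e^{−ζτ} τ^{a−1} (1+τ)^{−a} dτ, where the complex powers are defined via the real logarithm of τ > 0 and of 1+τ > 0. -/

import Mathlib

open MeasureTheory Set

noncomputable def rkPsi (B : ℝ) : ℝ → ℝ := fun t => (Real.exp (2 * B * t) - 1)⁻¹

noncomputable def rkPsi' (B : ℝ) : ℝ → ℝ :=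
  fun t => -(2 * B * Real.exp (2 * B * t)) / (Real.exp (2 * B * t) - 1) ^ 2

lemma rkPsi_deriv (B : ℝ) (hB : 0 < B) :
    ∀ t ∈ Ioi (0 : ℝ), HasDerivWithinAt (rkPsi B) (rkPsi' B t) (Ioi 0) t := by
  intro t ht
  have ht0 : 0 < t := ht
  have h0 : HasDerivAt (fun s : ℝ => 2 * B * s) (2 * B) t := by
    simpa using (hasDerivAt_id t).const_mul (2 * B)
  have h1 : HasDerivAt (fun s : ℝ => Real.exp (2 * B * s) - 1)
      (Real.exp (2 * B * t) * (2 * B)) t := h0.exp.sub_const 1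
  have hE : 1 < Real.exp (2 * B * t) := by
    rw [← Real.exp_zero]; exact Real.exp_lt_exp.mpr (by positivity)
  have hne : Real.exp (2 * B * t) - 1 ≠ 0 := by linarith
  have h2 := h1.inv hne
  have : rkPsi' B t = -(Real.exp (2 * B * t) * (2 * B)) / (Real.exp (2 * B * t) - 1) ^ 2 := by
    unfold rkPsi'; ring
  rw [this]
  exact h2.hasDerivWithinAt

lemma rkPsi_inj (B : ℝ) (hB : 0 < B) : InjOn (rkPsi B) (Ioi (0 : ℝ)) := by
  intro x hx y hy hxy
  have hx0 : 0 < x := hx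
  have hy0 : 0 < y := hy
  have hEx : 1 < Real.exp (2 * B * x) := by
    rw [← Real.exp_zero]; exact Real.exp_lt_exp.mpr (by positivity)
  have hEy : 1 < Real.exp (2 * B * y) := by
    rw [← Real.exp_zero]; exact Real.exp_lt_exp.mpr (by positivity)
  have h1 : Real.exp (2 * B * x) - 1 = Real.exp (2 * B * y) - 1 := by
    have := inv_injective hxy
    exact this
  have h2 : Real.exp (2 * B * x) = Real.exp (2 * B * y) := by linarith
  have := Real.exp_injective h2
  have hB' : (2 * B) ≠ 0 := by positivity
  exact mul_left_cancel₀ hB' this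

lemma rkPsi_image (B : ℝ) (hB : 0 < B) : rkPsi B '' Ioi (0 : ℝ) = Ioi (0 : ℝ) := by
  ext τ
  simp only [mem_image, mem_Ioi]
  constructor
  · rintro ⟨t, ht, rfl⟩
    have ht0 : 0 < t := ht
    have hE : 1 < Real.exp (2 * B * t) := by
      rw [← Real.exp_zero]; exact Real.exp_lt_exp.mpr (by positivity)
    exact inv_pos.mpr (by linarith)
  · intro hτ
    refine ⟨Real.log (1 + 1 / τ) / (2 * B), ?_, ?_⟩
    · have h1 : 1 < 1 + 1 / τ := by
        have : 0 < 1 / τ := by positivity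
        linarith
      have := Real.log_pos h1
      positivity
    · unfold rkPsi
      rw [mul_div_cancel₀ _ (by positivity : (2 * B : ℝ) ≠ 0),
        Real.exp_log (by positivity)]
      field_simp
      ring

theorem resolvent_kernel_integral_rep (B : ℝ) (hB : 0 < B) (ζ : ℝ) (hζ : 0 < ζ)
    (z : ℂ) (hz1 : -B < z.re) (hz2 : z.re < B) (a : ℂ) (ha : a = 1/2 - z / (2 * B)) :
    IntegrableOn
      (fun t : ℝ => ((B / Real.sinh (B * t) : ℝ) : ℂ) *
        Complex.exp (((-(ζ / 2) * (Real.cosh (B * t) / Real.sinh (B * t)) : ℝ) : ℂ)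
          + (t : ℂ) * z))
      (Ioi (0 : ℝ)) ∧
    (∫ t in Ioi (0 : ℝ), ((B / Real.sinh (B * t) : ℝ) : ℂ) *
        Complex.exp (((-(ζ / 2) * (Real.cosh (B * t) / Real.sinh (B * t)) : ℝ) : ℂ)
          + (t : ℂ) * z))
      = Complex.exp (-(ζ : ℂ) / 2) *
        ∫ τ in Ioi (0 : ℝ), Complex.exp (-(ζ : ℂ) * (τ : ℂ)) *
          Complex.exp ((a - 1) * (Real.log τ : ℂ)) *
          Complex.exp (-a * (Real.log (1 + τ) : ℂ)) := by
  -- the target integrand on the τ-side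
  set G : ℝ → ℂ := fun τ => Complex.exp (-(ζ : ℂ) * (τ : ℂ)) *
      Complex.exp ((a - 1) * (Real.log τ : ℂ)) *
      Complex.exp (-a * (Real.log (1 + τ) : ℂ)) with hGdef
  -- real part of a
  have haRe : a.re = 1 / 2 - z.re / (2 * B) := by
    rw [ha]
    have h2B : (2 * (B : ℂ)) = ((2 * B : ℝ) : ℂ) := by push_cast; ring
    rw [h2B, Complex.sub_re, Complex.div_ofReal_re]
    norm_num
  have haRe0 : 0 < a.re := by
    rw [haRe]
    have : z.re / (2 * B) < 1 / 2 := by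
      rw [div_lt_iff₀ (by positivity)]; linarith
    linarith
  have haRe1 : a.re < 1 := by
    rw [haRe]
    have : -(1 / 2) < z.re / (2 * B) := by
      rw [lt_div_iff₀ (by positivity)]; linarith
    linarith
  -- integrability of G on Ioi 0
  have hGint : IntegrableOn G (Ioi (0 : ℝ)) := by
    have hdom : IntegrableOn (fun x : ℝ => x ^ (a.re - 1) * Real.exp (-ζ * x)) (Ioi 0) := by
      have h := integrableOn_rpow_mul_exp_neg_mul_rpow
        (by linarith : (-1 : ℝ) < a.re - 1) (zero_lt_one : (0:ℝ) < 1) hζ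
      simpa [Real.rpow_one] using h
    have hsub : Ioi (0:ℝ) ⊆ {0}ᶜ := fun x hx => ne_of_gt hx
    have hlogC : ContinuousOn (fun τ : ℝ => ((Real.log τ : ℝ) : ℂ)) (Ioi 0) :=
      Complex.continuous_ofReal.comp_continuousOn (Real.continuousOn_log.mono hsub)
    have hlog1C : ContinuousOn (fun τ : ℝ => ((Real.log (1 + τ) : ℝ) : ℂ)) (Ioi 0) := by
      refine Complex.continuous_ofReal.comp_continuousOn ?_
      refine Real.continuousOn_log.comp ((continuous_const.add continuous_id).continuousOn) ?_
      intro τ hτ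
      have : (0:ℝ) < 1 + τ := by have := mem_Ioi.mp hτ; linarith
      exact ne_of_gt this
    have hcont : ContinuousOn G (Ioi 0) := by
      refine ContinuousOn.mul (ContinuousOn.mul ?_ ?_) ?_
      · exact (Complex.continuous_exp.comp
          (continuous_const.mul Complex.continuous_ofReal)).continuousOn
      · exact Complex.continuous_exp.comp_continuousOn (continuousOn_const.mul hlogC)
      · exact Complex.continuous_exp.comp_continuousOn (continuousOn_const.mul hlog1C)
    refine Integrable.mono' hdom (hcont.aestronglyMeasurable measurableSet_Ioi) ?_
    rw [ae_restrict_iff' measurableSet_Ioi]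
    filter_upwards with τ hτ
    have hτ0 : (0:ℝ) < τ := hτ
    have hre1 : (-(ζ : ℂ) * (τ : ℂ)).re = -ζ * τ := by simp
    have hre2 : ((a - 1) * ((Real.log τ : ℝ) : ℂ)).re = (a.re - 1) * Real.log τ := by
      simp [Complex.mul_re]
    have hre3 : ((-a) * ((Real.log (1 + τ) : ℝ) : ℂ)).re = -a.re * Real.log (1 + τ) := by
      simp [Complex.mul_re]
    have hnorm : ‖G τ‖ = Real.exp (-ζ * τ) * Real.exp ((a.re - 1) * Real.log τ) *
        Real.exp (-a.re * Real.log (1 + τ)) := by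
      simp only [hGdef, norm_mul, Complex.norm_exp, hre1, hre2, hre3]
    rw [hnorm]
    have h3 : Real.exp (-a.re * Real.log (1 + τ)) ≤ 1 := by
      have hl : 0 ≤ Real.log (1 + τ) := Real.log_nonneg (by linarith)
      have : -a.re * Real.log (1 + τ) ≤ 0 := by nlinarith
      calc Real.exp (-a.re * Real.log (1 + τ)) ≤ Real.exp 0 := Real.exp_le_exp.mpr this
        _ = 1 := Real.exp_zero
    have h2 : Real.exp ((a.re - 1) * Real.log τ) = τ ^ (a.re - 1) := by
      rw [Real.rpow_def_of_pos hτ0, mul_comm]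
    calc Real.exp (-ζ * τ) * Real.exp ((a.re - 1) * Real.log τ) *
          Real.exp (-a.re * Real.log (1 + τ))
        ≤ Real.exp (-ζ * τ) * Real.exp ((a.re - 1) * Real.log τ) * 1 := by
          gcongr
      _ = τ ^ (a.re - 1) * Real.exp (-ζ * τ) := by rw [mul_one, h2]; ring
  -- pointwise identity
  have hpt : ∀ t ∈ Ioi (0:ℝ),
      ((B / Real.sinh (B * t) : ℝ) : ℂ) *
        Complex.exp (((-(ζ / 2) * (Real.cosh (B * t) / Real.sinh (B * t)) : ℝ) : ℂ)
          + (t : ℂ) * z)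
      = Complex.exp (-(ζ : ℂ) / 2) * (|rkPsi' B t| • G (rkPsi B t)) := by
    intro t ht
    have ht0 : (0:ℝ) < t := ht
    set u := Real.exp (B * t) with hu
    have hu0 : 0 < u := Real.exp_pos _
    have hu1 : 1 < u := by
      rw [hu, ← Real.exp_zero]; exact Real.exp_lt_exp.mpr (by positivity)
    have hE2 : Real.exp (2 * B * t) = u * u := by
      rw [hu, ← Real.exp_add]; ring_nf
    have hEm1 : 0 < u * u - 1 := by nlinarith
    have hsinh : Real.sinh (B * t) = (u * u - 1) / (2 * u) := by
      rw [Real.sinh_eq, Real.exp_neg, ← hu]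
      rw [div_eq_div_iff (by norm_num) (by positivity)]; field_simp
    have hcosh : Real.cosh (B * t) = (u * u + 1) / (2 * u) := by
      rw [Real.cosh_eq, Real.exp_neg, ← hu]
      rw [div_eq_div_iff (by norm_num) (by positivity)]; field_simp
    have hψt : rkPsi B t = (u * u - 1)⁻¹ := by rw [rkPsi]; rw [hE2]
    have habs : |rkPsi' B t| = 2 * B * (u * u) / (u * u - 1) ^ 2 := by
      have h : rkPsi' B t = -(2 * B * (u * u) / (u * u - 1) ^ 2) := by
        rw [rkPsi']; rw [hE2]; ring
      rw [h, abs_neg, abs_of_pos (by positivity)]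
    have hpre : B / Real.sinh (B * t) = 2 * B * u / (u * u - 1) := by
      rw [hsinh]; field_simp
    have hratio : -(ζ / 2) * (Real.cosh (B * t) / Real.sinh (B * t))
        = -(ζ / 2) - ζ * (u * u - 1)⁻¹ := by
      rw [hcosh, hsinh, div_div_div_cancel_right₀]
      · have h1 : u * u - 1 ≠ 0 := hEm1.ne'
        have h2 : u ^ 2 - 1 ≠ 0 := by rw [sq]; exact hEm1.ne'
        field_simp; ring
      · positivity
    set L := Real.log (u * u - 1) with hL
    have hlogE : Real.log (u * u) = 2 * B * t := by rw [← hE2, Real.log_exp]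
    have hlog1 : Real.log ((u * u - 1)⁻¹) = -L := by rw [Real.log_inv, hL]
    have hlog2 : Real.log (1 + (u * u - 1)⁻¹) = 2 * B * t - L := by
      have h1 : 1 + (u * u - 1)⁻¹ = (u * u) / (u * u - 1) := by
        have h2 : u ^ 2 - 1 ≠ 0 := by rw [sq]; exact hEm1.ne'
        field_simp
        ring
      rw [h1, Real.log_div (by positivity) (ne_of_gt hEm1), hlogE, hL]
    have hucne : (u : ℂ) ≠ 0 := by exact_mod_cast hu0.ne'
    have hBcne : (B : ℂ) ≠ 0 := by exact_mod_cast hB.ne'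
    have hum1c : ((u : ℂ) * u - 1) ≠ 0 := by
      have : ((u * u - 1 : ℝ) : ℂ) ≠ 0 := by exact_mod_cast hEm1.ne'
      push_cast at this
      convert this using 2 <;> ring_nf
    have hexp_eq : (-(ζ : ℂ) / 2) + (-(ζ : ℂ) * (((u * u - 1)⁻¹ : ℝ) : ℂ)
        + ((a - 1) * ((-L : ℝ) : ℂ)) + (-a * ((2 * B * t - L : ℝ) : ℂ)))
        = (((-(ζ / 2) - ζ * (u * u - 1)⁻¹ : ℝ)) : ℂ) + (t : ℂ) * z
          + ((L : ℝ) : ℂ) + ((-(B * t) : ℝ) : ℂ) := by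
      subst ha
      push_cast
      have h2 : z / (2 * (B : ℂ)) * (2 * (B : ℂ) * (t : ℂ)) = z * (t : ℂ) := by
        field_simp
      linear_combination h2
    have e1 : Complex.exp ((L : ℝ) : ℂ) = ((u * u - 1 : ℝ) : ℂ) := by
      rw [← Complex.ofReal_exp, hL, Real.exp_log hEm1]
    have e2 : Complex.exp ((-(B * t) : ℝ) : ℂ) = ((u⁻¹ : ℝ) : ℂ) := by
      rw [← Complex.ofReal_exp, Real.exp_neg, ← hu]
    have key : Complex.exp (-(ζ : ℂ) / 2) *
          (Complex.exp (-(ζ : ℂ) * (((u * u - 1)⁻¹ : ℝ) : ℂ)) *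
            Complex.exp ((a - 1) * ((-L : ℝ) : ℂ)) *
            Complex.exp (-a * ((2 * B * t - L : ℝ) : ℂ)))
        = ((u * u - 1 : ℝ) : ℂ) * ((u⁻¹ : ℝ) : ℂ) *
            Complex.exp ((((-(ζ / 2) - ζ * (u * u - 1)⁻¹ : ℝ)) : ℂ) + (t : ℂ) * z) := by
      rw [← Complex.exp_add, ← Complex.exp_add, ← Complex.exp_add, hexp_eq,
        Complex.exp_add, Complex.exp_add, e1, e2]
      ring
    simp only [hGdef]
    rw [hψt, hlog1, hlog2, habs, hpre, hratio, Complex.real_smul]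
    rw [mul_left_comm (Complex.exp (-(ζ : ℂ) / 2)), key]
    push_cast
    field_simp
  -- transfer via change of variables
  have hF2 : IntegrableOn (fun t => |rkPsi' B t| • G (rkPsi B t)) (Ioi (0:ℝ)) := by
    rw [← integrableOn_image_iff_integrableOn_abs_deriv_smul measurableSet_Ioi
      (rkPsi_deriv B hB) (rkPsi_inj B hB) G]
    rw [rkPsi_image B hB]
    exact hGint
  have hFint : IntegrableOn
      (fun t : ℝ => ((B / Real.sinh (B * t) : ℝ) : ℂ) *
        Complex.exp (((-(ζ / 2) * (Real.cosh (B * t) / Real.sinh (B * t)) : ℝ) : ℂ)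
          + (t : ℂ) * z)) (Ioi (0:ℝ)) := by
    have h3 : IntegrableOn
        (fun t => Complex.exp (-(ζ : ℂ) / 2) * (|rkPsi' B t| • G (rkPsi B t))) (Ioi (0:ℝ)) :=
      hF2.const_mul _
    exact h3.congr_fun (fun t ht => (hpt t ht).symm) measurableSet_Ioi
  refine ⟨hFint, ?_⟩
  calc (∫ t in Ioi (0 : ℝ), ((B / Real.sinh (B * t) : ℝ) : ℂ) *
        Complex.exp (((-(ζ / 2) * (Real.cosh (B * t) / Real.sinh (B * t)) : ℝ) : ℂ)
          + (t : ℂ) * z))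
      = ∫ t in Ioi (0:ℝ), Complex.exp (-(ζ : ℂ) / 2) * (|rkPsi' B t| • G (rkPsi B t)) :=
        setIntegral_congr_fun measurableSet_Ioi hpt
    _ = Complex.exp (-(ζ : ℂ) / 2) * ∫ t in Ioi (0:ℝ), |rkPsi' B t| • G (rkPsi B t) :=
        integral_const_mul _ _
    _ = Complex.exp (-(ζ : ℂ) / 2) * ∫ τ in rkPsi B '' Ioi (0:ℝ), G τ := by
        rw [integral_image_eq_integral_abs_deriv_smul measurableSet_Ioi
          (rkPsi_deriv B hB) (rkPsi_inj B hB) G]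
    _ = Complex.exp (-(ζ : ℂ) / 2) * ∫ τ in Ioi (0:ℝ), G τ := by rw [rkPsi_image B hB]
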